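/- Raabe's formula: for every real t ≥ 0, ∫₀¹ log Γ(x+t) dx = log √(2π) + t log t - t (with the convention t log t = 0 at t = 0). -/

import Mathlib

open scoped Real
open MeasureTheory intervalIntegral Set

namespace RaabeAux

noncomputable def lG : ℝ → ℝ := fun x => Real.log (Real.Gamma x)

lemma continuousAt_lG {x : ℝ} (hx : 0 < x) : ContinuousAt lG x := by
  refine (Real.differentiableAt_Gamma fun m => ?_).continuousAt.log
    (Real.Gamma_pos_of_pos hx).ne'
  have : -(m : ℝ) ≤ 0 := neg_nonpos.mpr m.cast_nonneg
  linarith [hx]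

lemma continuousOn_lG {s : Set ℝ} (hs : s ⊆ Ioi 0) : ContinuousOn lG s :=
  fun x hx => (continuousAt_lG (hs hx)).continuousWithinAt

lemma intervalIntegrable_lG_pos {a b : ℝ} (ha : 0 < a) (hb : 0 < b) :
    IntervalIntegrable lG volume a b := by
  refine (continuousOn_lG ?_).intervalIntegrable
  intro x hx
  rcases hx with ⟨h1, _⟩
  exact lt_of_lt_of_le (lt_min ha hb) h1

lemma intervalIntegrable_log01 : IntervalIntegrable Real.log volume 0 1 := by
  have h : IntervalIntegrable (fun x : ℝ => -Real.log x) volume 0 1 := by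
    apply intervalIntegrable_deriv_of_nonneg
      (g := fun x : ℝ => x - x * Real.log x)
    · exact (continuous_id.sub Real.continuous_mul_log).continuousOn
    · intro x hx
      simp only [min_eq_left zero_le_one, max_eq_right zero_le_one] at hx
      have := (hasDerivAt_id x).sub (Real.hasDerivAt_mul_log hx.1.ne')
      exact this.congr_deriv (by ring)
    · intro x hx
      simp only [min_eq_left zero_le_one, max_eq_right zero_le_one] at hx
      have : Real.log x ≤ 0 := Real.log_nonpos hx.1.le hx.2.le
      linarith
  have heq : Real.log = fun x : ℝ => -(-Real.log x) := by ext x; simp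
  rw [heq]
  exact h.neg

lemma integral_log01 : ∫ x in (0:ℝ)..1, Real.log x = -1 := by
  have := integral_eq_sub_of_hasDerivAt_of_le (f := fun x : ℝ => x * Real.log x - x)
    (f' := Real.log) zero_le_one
    ((Real.continuous_mul_log.sub continuous_id).continuousOn)
    (fun x hx => by
      have := (Real.hasDerivAt_mul_log hx.1.ne').sub (hasDerivAt_id x)
      exact this.congr_deriv (by ring))
    intervalIntegrable_log01
  simpa using this

lemma lG_rec {x : ℝ} (hx : 0 < x) : lG (x + 1) = Real.log x + lG x := by
  rw [lG, lG, Real.Gamma_add_one hx.ne',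
    Real.log_mul hx.ne' (Real.Gamma_pos_of_pos hx).ne']

lemma lG_eq_on_Icc : ∀ x ∈ Icc (0:ℝ) 1, lG x = lG (x + 1) - Real.log x := by
  intro x hx
  rcases eq_or_lt_of_le hx.1 with h | h
  · simp [lG, ← h, Real.Gamma_zero, Real.Gamma_one]
  · rw [lG_rec h]; ring

lemma continuousOn_lG_shift {c : ℝ} (hc : 0 < c) {s : Set ℝ} (hs : s ⊆ Ici 0) :
    ContinuousOn (fun x => lG (x + c)) s := by
  intro x hx
  have h0 : (0:ℝ) ≤ x := hs hx
  have h1 : (0:ℝ) < x + c := by linarith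
  have h2 : ContinuousAt (fun y : ℝ => y + c) x := by fun_prop
  exact (ContinuousAt.comp (f := fun y : ℝ => y + c) (continuousAt_lG h1) h2).continuousWithinAt

lemma intervalIntegrable_lG01 : IntervalIntegrable lG volume 0 1 := by
  have h : IntervalIntegrable (fun x => lG (x + 1) - Real.log x) volume 0 1 :=
    ((continuousOn_lG_shift one_pos (by rw [uIcc_of_le zero_le_one]; exact Icc_subset_Ici_self)).intervalIntegrable).sub
      intervalIntegrable_log01
  apply h.congr
  have : uIoc (0:ℝ) 1 = Ioc 0 1 := uIoc_of_le zero_le_one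
  intro x hx
  rw [this] at hx
  exact (lG_eq_on_Icc x ⟨hx.1.le, hx.2⟩).symm

end RaabeAux

namespace RaabeAux

lemma F0 : ∫ x in (0:ℝ)..1, lG x = Real.log (Real.sqrt (2 * π)) := by
  set I := ∫ x in (0:ℝ)..1, lG x with hI
  have hsub : uIcc (0:ℝ) (1/2) ⊆ uIcc (0:ℝ) 1 := by
    rw [uIcc_of_le (by norm_num), uIcc_of_le zero_le_one]
    exact Icc_subset_Icc le_rfl (by norm_num)
  have hhalf : IntervalIntegrable lG volume 0 (1/2) :=
    intervalIntegrable_lG01.mono_set hsub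
  have hrest : IntervalIntegrable lG volume (1/2) 1 :=
    intervalIntegrable_lG_pos (by norm_num) one_pos
  have hshift_int : IntervalIntegrable (fun x => lG (x + 1/2)) volume 0 (1/2) := by
    refine (continuousOn_lG_shift (by norm_num) ?_).intervalIntegrable
    rw [uIcc_of_le (by norm_num)]
    exact fun x hx => hx.1
  have hsplit : I = (∫ x in (0:ℝ)..(1/2), lG x) + ∫ x in (1/2:ℝ)..1, lG x :=
    (integral_add_adjacent_intervals hhalf hrest).symm
  have hshift : (∫ x in (1/2:ℝ)..1, lG x) = ∫ x in (0:ℝ)..(1/2), lG (x + 1/2) := by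
    rw [integral_comp_add_right (fun x => lG x) (1/2)]
    norm_num
  have hadd : (∫ x in (0:ℝ)..(1/2), lG x) + (∫ x in (0:ℝ)..(1/2), lG (x + 1/2))
      = ∫ x in (0:ℝ)..(1/2), (lG x + lG (x + 1/2)) :=
    (integral_add hhalf hshift_int).symm
  have hcongr : (∫ x in (0:ℝ)..(1/2), (lG x + lG (x + 1/2)))
      = ∫ x in (0:ℝ)..(1/2), (lG (2*x) + ((1 - 2*x) * Real.log 2 + Real.log (Real.sqrt π))) := by
    refine integral_congr_ae (Filter.Eventually.of_forall fun x hx => ?_)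
    rw [uIoc_of_le (by norm_num : (0:ℝ) ≤ 1/2)] at hx
    have hx0 : 0 < x := hx.1
    have h2x : 0 < 2 * x := by linarith
    have dup := Real.Gamma_mul_Gamma_add_half x
    have key : lG x + lG (x + 1/2)
        = Real.log (Real.Gamma (2*x) * (2:ℝ) ^ (1 - 2*x) * Real.sqrt π) := by
      rw [lG, lG, ← Real.log_mul (Real.Gamma_pos_of_pos hx0).ne'
        (Real.Gamma_pos_of_pos (by linarith)).ne', dup]
    rw [key, Real.log_mul (by positivity) (by positivity),
      Real.log_mul (Real.Gamma_pos_of_pos h2x).ne' (by positivity),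
      Real.log_rpow two_pos]
    rw [lG]
    ring
  have hint2x : IntervalIntegrable (fun x => lG (2*x)) volume 0 (1/2) := by
    have := intervalIntegrable_lG01.comp_mul_left (c := 2) (by simp) (by simp)
    norm_num at this
    exact this
  have hcont2 : IntervalIntegrable
      (fun x : ℝ => (1 - 2*x) * Real.log 2 + Real.log (Real.sqrt π)) volume 0 (1/2) :=
    (Continuous.intervalIntegrable (by fun_prop) _ _)
  have hsplit2 : (∫ x in (0:ℝ)..(1/2), (lG (2*x) + ((1 - 2*x) * Real.log 2 + Real.log (Real.sqrt π))))
      = (∫ x in (0:ℝ)..(1/2), lG (2*x))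
        + ∫ x in (0:ℝ)..(1/2), ((1 - 2*x) * Real.log 2 + Real.log (Real.sqrt π)) :=
    integral_add hint2x hcont2
  have hval1 : (∫ x in (0:ℝ)..(1/2), lG (2*x)) = (1/2) * I := by
    have key := smul_integral_comp_mul_left (f := lG) (a := (0:ℝ)) (b := 1/2) 2
    rw [show (2:ℝ)*0 = 0 by ring, show (2:ℝ)*(1/2) = 1 by ring, smul_eq_mul, ← hI] at key
    linarith
  have hval2 : (∫ x in (0:ℝ)..(1/2), ((1 - 2*x) * Real.log 2 + Real.log (Real.sqrt π)))
      = Real.log 2 / 4 + Real.log (Real.sqrt π) / 2 := by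
    have h := integral_eq_sub_of_hasDerivAt (a := (0:ℝ)) (b := 1/2)
      (f := fun x => (x - x^2) * Real.log 2 + Real.log (Real.sqrt π) * x)
      (f' := fun x => (1 - 2*x) * Real.log 2 + Real.log (Real.sqrt π))
      (fun x _ => by
        have h1 := (((hasDerivAt_id x).sub (hasDerivAt_pow 2 x)).mul_const (Real.log 2)).add
          ((hasDerivAt_id x).const_mul (Real.log (Real.sqrt π)))
        exact h1.congr_deriv (by norm_num))
      hcont2
    rw [h]
    norm_num
    ring
  have hlog : Real.log (Real.sqrt (2 * π)) = Real.log 2 / 2 + Real.log (Real.sqrt π) := by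
    rw [Real.log_sqrt (by positivity), Real.log_mul two_ne_zero Real.pi_pos.ne',
      Real.log_sqrt Real.pi_pos.le]
    ring
  have : I = (1/2) * I + (Real.log 2 / 4 + Real.log (Real.sqrt π) / 2) := by
    conv_lhs => rw [hsplit, hshift, hadd, hcongr, hsplit2, hval1, hval2]
  rw [hlog]
  linarith

end RaabeAux

namespace RaabeAux

noncomputable def G : ℝ → ℝ := fun u => ∫ x in (1:ℝ)..u, lG x

lemma hasDerivAt_G {u : ℝ} (hu : 0 < u) : HasDerivAt G (lG u) u := by
  refine integral_hasDerivAt_right (intervalIntegrable_lG_pos one_pos hu) ?_ (continuousAt_lG hu)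
  exact (ContinuousAt.stronglyMeasurableAtFilter isOpen_Ioi
    (fun x hx => continuousAt_lG hx)) u (mem_Ioi.mpr hu)

lemma H_const {t : ℝ} (ht : 0 < t) :
    G (t+1) - G t - (t * Real.log t - t) = G 2 + 1 := by
  have key : ∀ u : ℝ, 0 < u →
      G (u+1) - G u - (u * Real.log u - u) = G (1+1) - G 1 - (1 * Real.log 1 - 1) := by
    intro v hv
    have hderiv : ∀ u ∈ uIcc (1:ℝ) v,
        HasDerivAt (fun w => G (w+1) - G w - (w * Real.log w - w)) ((fun _ => (0:ℝ)) u) u := by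
      intro u huu
      have hu : 0 < u := by
        rcases le_total (1:ℝ) v with h | h
        · rw [uIcc_of_le h] at huu; linarith [huu.1]
        · rw [uIcc_of_ge h] at huu; linarith [huu.1]
      have h1 : HasDerivAt (fun w : ℝ => G (w+1)) (lG (u+1)) u := by
        have := (hasDerivAt_G (by linarith : (0:ℝ) < u+1)).comp u ((hasDerivAt_id u).add_const 1)
        exact this.congr_deriv (mul_one _)
      have h2 := hasDerivAt_G hu
      have h3 : HasDerivAt (fun w : ℝ => w * Real.log w - w) (Real.log u) u := by
        have := (Real.hasDerivAt_mul_log hu.ne').sub (hasDerivAt_id u)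
        exact this.congr_deriv (by ring)
      have h4 := (h1.sub h2).sub h3
      refine h4.congr_deriv ?_
      rw [lG_rec hu]
      ring
    have h0 := integral_eq_sub_of_hasDerivAt hderiv
      (_root_.intervalIntegrable_const (c := (0:ℝ)))
    simp only [intervalIntegral.integral_zero] at h0
    linarith [h0]
  have hG1 : G 1 = 0 := integral_same
  have := key t ht
  rw [this, hG1]
  norm_num

lemma G2 : G 2 = Real.log (Real.sqrt (2*π)) - 1 := by
  have h1 : (∫ x in (0:ℝ)..1, lG (x+1)) = G 2 := by
    rw [integral_comp_add_right (fun x => lG x) 1, G]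
    norm_num
  have h2 : (∫ x in (0:ℝ)..1, lG (x+1)) = ∫ x in (0:ℝ)..1, (Real.log x + lG x) := by
    refine integral_congr_ae (Filter.Eventually.of_forall fun x hx => ?_)
    rw [uIoc_of_le zero_le_one] at hx
    exact lG_rec hx.1
  have h3 : (∫ x in (0:ℝ)..1, (Real.log x + lG x)) = -1 + Real.log (Real.sqrt (2*π)) := by
    rw [integral_add intervalIntegrable_log01 intervalIntegrable_lG01, integral_log01, F0]
  rw [← h1, h2, h3]
  ring

end RaabeAux

open RaabeAux in
/-- Raabe's formula: for `t ≥ 0`, `∫₀¹ log Γ(x+t) dx = log √(2π) + t log t - t`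
(with the convention `t * log t = 0` at `t = 0`, which holds since `Real.log 0 = 0`). -/
theorem raabe_formula (t : ℝ) (ht : 0 ≤ t) :
    ∫ x in (0 : ℝ)..1, Real.log (Real.Gamma (x + t))
      = Real.log (Real.sqrt (2 * π)) + (t * Real.log t - t) := by
  rcases eq_or_lt_of_le ht with h0 | h0
  · rw [← h0]
    simp only [add_zero, Real.log_zero, mul_zero, zero_mul, sub_zero]
    exact F0
  · have hF : (∫ x in (0:ℝ)..1, Real.log (Real.Gamma (x + t))) = G (t+1) - G t := by
      have e1 : (∫ x in (0:ℝ)..1, Real.log (Real.Gamma (x + t))) = ∫ x in t..(t+1), lG x := by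
        rw [show (∫ x in (0:ℝ)..1, Real.log (Real.Gamma (x + t)))
            = ∫ x in (0:ℝ)..1, lG (x + t) from rfl,
          integral_comp_add_right (fun x => lG x) t]
        norm_num [add_comm]
      have e2 : G (t+1) - G t = ∫ x in t..(t+1), lG x :=
        integral_interval_sub_left (intervalIntegrable_lG_pos one_pos (by linarith))
          (intervalIntegrable_lG_pos one_pos h0)
      rw [e1, e2]
    rw [hF]
    have := H_const h0
    rw [G2] at this
    linarith
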